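/- Let φ_1, φ_2, φ_3 ∈ ℝ with φ_0 := 0, and consider the element T = −Σ ε_{αβγδ} cos(φ_α − φ_β + φ_γ − φ_δ) x^α ⊗ x^β ⊗ x^γ ⊗ x^δ + i Σ_{μ,ν} sin(2(φ_μ − φ_ν)) x^μ ⊗ x^ν ⊗ x^μ ⊗ x^ν of the 4-fold tensor power of the free vector space on symbols x^0, x^1, x^2, x^3 (indices range over 0,...,3, ε completely antisymmetric with ε_{0123} = 1). Then T = 0 if and only if (cos(φ_α − φ_β + φ_γ − φ_δ) = 0 for all permutations (α,β,γ,δ) of (0,1,2,3) and sin(2(φ_μ − φ_ν)) = 0 for all μ,ν); in particular T = 0 when φ_1 = φ_2 = φ_3 = π/2, and also when φ_1 = π/2, φ_2 = φ_3 = 0, while T ≠ 0 when φ_1 = φ_2 = φ_3 = 0. -/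

import Mathlib

set_option synthInstance.maxHeartbeats 1000000
set_option maxHeartbeats 1000000

open Complex Real Matrix
open scoped TensorProduct

/-- The completely antisymmetric symbol on four indices, with ε₀₁₂₃ = 1. -/
def epsFour (a b c d : Fin 4) : ℤ :=
  if a = b ∨ a = c ∨ a = d ∨ b = c ∨ b = d ∨ c = d then 0
  else (if a < b then 1 else -1) * (if a < c then 1 else -1) * (if a < d then 1 else -1)
    * (if b < c then 1 else -1) * (if b < d then 1 else -1) * (if c < d then 1 else -1)

/-- The basis vector x^μ of the free vector space on the symbols x⁰,…,x³. -/
noncomputable def xBasis (μ : Fin 4) : Fin 4 → ℂ := Pi.single μ 1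

/-- The element ch̃_{3/2}(U_u) of the 4-fold tensor power, formula (aan) of the paper,
with φ₀ = 0 and φ = ![0, φ₁, φ₂, φ₃]. -/
noncomputable def chT (φ₁ φ₂ φ₃ : ℝ) :
    (Fin 4 → ℂ) ⊗[ℂ] ((Fin 4 → ℂ) ⊗[ℂ] ((Fin 4 → ℂ) ⊗[ℂ] (Fin 4 → ℂ))) :=
  (∑ α : Fin 4, ∑ β : Fin 4, ∑ γ : Fin 4, ∑ δ : Fin 4,
      (-(epsFour α β γ δ : ℂ) *
          (Real.cos (![0, φ₁, φ₂, φ₃] α - ![0, φ₁, φ₂, φ₃] β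
            + ![0, φ₁, φ₂, φ₃] γ - ![0, φ₁, φ₂, φ₃] δ) : ℂ)) •
        (xBasis α ⊗ₜ[ℂ] (xBasis β ⊗ₜ[ℂ] (xBasis γ ⊗ₜ[ℂ] xBasis δ))))
  + I • (∑ μ : Fin 4, ∑ ν : Fin 4,
      ((Real.sin (2 * (![0, φ₁, φ₂, φ₃] μ - ![0, φ₁, φ₂, φ₃] ν)) : ℂ)) •
        (xBasis μ ⊗ₜ[ℂ] (xBasis ν ⊗ₜ[ℂ] (xBasis μ ⊗ₜ[ℂ] xBasis ν))))

/-! ### Auxiliary machinery -/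

/-- The tensor-product basis of the 4-fold tensor power. -/
noncomputable def tB : Module.Basis (Fin 4 × (Fin 4 × (Fin 4 × Fin 4))) ℂ
    ((Fin 4 → ℂ) ⊗[ℂ] ((Fin 4 → ℂ) ⊗[ℂ] ((Fin 4 → ℂ) ⊗[ℂ] (Fin 4 → ℂ)))) :=
  (Pi.basisFun ℂ (Fin 4)).tensorProduct ((Pi.basisFun ℂ (Fin 4)).tensorProduct
    ((Pi.basisFun ℂ (Fin 4)).tensorProduct (Pi.basisFun ℂ (Fin 4))))

lemma tB_apply (a b c d : Fin 4) :
    tB (a, (b, (c, d))) = xBasis a ⊗ₜ[ℂ] (xBasis b ⊗ₜ[ℂ] (xBasis c ⊗ₜ[ℂ] xBasis d)) := by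
  simp [tB, Module.Basis.tensorProduct_apply, xBasis, Pi.basisFun_apply]

lemma chT_repr (φ₁ φ₂ φ₃ : ℝ) (a b c d : Fin 4) :
    tB.repr (chT φ₁ φ₂ φ₃) (a, (b, (c, d))) =
      -(epsFour a b c d : ℂ) * (Real.cos (![0, φ₁, φ₂, φ₃] a - ![0, φ₁, φ₂, φ₃] b
            + ![0, φ₁, φ₂, φ₃] c - ![0, φ₁, φ₂, φ₃] d) : ℂ)
        + (if a = c ∧ b = d then
            I * (Real.sin (2 * (![0, φ₁, φ₂, φ₃] a - ![0, φ₁, φ₂, φ₃] b)) : ℂ) else 0) := by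
  have hx : ∀ α β γ δ : Fin 4, xBasis α ⊗ₜ[ℂ] (xBasis β ⊗ₜ[ℂ] (xBasis γ ⊗ₜ[ℂ] xBasis δ))
      = tB (α, (β, (γ, δ))) := fun α β γ δ => (tB_apply α β γ δ).symm
  rw [chT]
  simp only [hx, map_add, _root_.map_smul, map_sum, Finsupp.coe_add, Finsupp.coe_smul,
    Pi.add_apply, Pi.smul_apply, Finsupp.coe_finset_sum, Finset.sum_apply,
    Module.Basis.repr_self, Finsupp.single_apply, Prod.mk.injEq, smul_eq_mul]
  simp [ite_and, Finset.sum_ite_eq, Finset.sum_ite_eq', mul_ite]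

lemma eps_ne_zero {a b c d : Fin 4} (h : a ≠ b ∧ a ≠ c ∧ a ≠ d ∧ b ≠ c ∧ b ≠ d ∧ c ≠ d) :
    epsFour a b c d ≠ 0 := by
  revert h; revert a b c d; decide

lemma eps_eq_zero {a b c d : Fin 4}
    (h : a = b ∨ a = c ∨ a = d ∨ b = c ∨ b = d ∨ c = d) : epsFour a b c d = 0 := by
  simp [epsFour, h]

/-- The main characterization: chT vanishes iff all coefficients vanish. -/
lemma chT_zero_iff (φ₁ φ₂ φ₃ : ℝ) :
    chT φ₁ φ₂ φ₃ = 0 ↔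
      ((∀ a : Fin 4 → Fin 4, Function.Bijective a →
          Real.cos (![0, φ₁, φ₂, φ₃] (a 0) - ![0, φ₁, φ₂, φ₃] (a 1)
            + ![0, φ₁, φ₂, φ₃] (a 2) - ![0, φ₁, φ₂, φ₃] (a 3)) = 0) ∧
       (∀ μ ν : Fin 4,
          Real.sin (2 * (![0, φ₁, φ₂, φ₃] μ - ![0, φ₁, φ₂, φ₃] ν)) = 0)) := by
  have hiff : chT φ₁ φ₂ φ₃ = 0 ↔
      ∀ a b c d : Fin 4, tB.repr (chT φ₁ φ₂ φ₃) (a, (b, (c, d))) = 0 := by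
    constructor
    · intro h a b c d; rw [h]; simp
    · intro h
      have : tB.repr (chT φ₁ φ₂ φ₃) = 0 := by
        ext q
        obtain ⟨a, b, c, d⟩ := q
        simpa using h a b c d
      simpa using congrArg tB.repr.symm this
  rw [hiff]
  constructor
  · intro h
    constructor
    · intro a ha
      have hinj := ha.injective
      have h02 : a 0 ≠ a 2 := fun e => by simpa using hinj e
      have hq := h (a 0) (a 1) (a 2) (a 3)
      rw [chT_repr] at hq
      rw [if_neg (by tauto)] at hq
      have heps : epsFour (a 0) (a 1) (a 2) (a 3) ≠ 0 := by
        apply eps_ne_zero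
        refine ⟨?_, ?_, ?_, ?_, ?_, ?_⟩ <;> intro e <;> simpa using hinj e
      have hepsC : (epsFour (a 0) (a 1) (a 2) (a 3) : ℂ) ≠ 0 := by
        exact_mod_cast heps
      have := hq
      rw [add_zero, neg_mul, neg_eq_zero, mul_eq_zero] at this
      rcases this with h' | h'
      · exact absurd h' hepsC
      · exact_mod_cast h'
    · intro μ ν
      have hq := h μ ν μ ν
      rw [chT_repr] at hq
      rw [if_pos ⟨rfl, rfl⟩, eps_eq_zero (by tauto)] at hq
      simp only [Int.cast_zero, neg_zero, zero_mul, zero_add, mul_eq_zero] at hq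
      rcases hq with h' | h'
      · exact absurd h' I_ne_zero
      · exact_mod_cast h'
  · rintro ⟨h1, h2⟩ a b c d
    rw [chT_repr]
    by_cases hd : a = b ∨ a = c ∨ a = d ∨ b = c ∨ b = d ∨ c = d
    · rw [eps_eq_zero hd]
      have : (if a = c ∧ b = d then
          I * (Real.sin (2 * (![0, φ₁, φ₂, φ₃] a - ![0, φ₁, φ₂, φ₃] b)) : ℂ) else 0) = 0 := by
        split
        · rw [h2 a b]; simp
        · rfl
      rw [this]; simp
    · push_neg at hd
      obtain ⟨h1', h2', h3', h4', h5', h6'⟩ := hd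
      have hbij : Function.Bijective ![a, b, c, d] := by
        rw [Fintype.bijective_iff_injective_and_card]
        refine ⟨?_, rfl⟩
        intro i j hij
        fin_cases i <;> fin_cases j <;> simp_all
      have hcos := h1 ![a, b, c, d] hbij
      simp only [Matrix.cons_val_zero, Matrix.cons_val_one, Matrix.head_cons,
        Matrix.cons_val_two, Matrix.tail_cons, Matrix.cons_val_three] at hcos
      rw [if_neg (by tauto), hcos]
      simp

lemma hsin0 : ∀ x : ℝ, (x = 0 ∨ x = π ∨ x = -π) → Real.sin x = 0 := by
  rintro x (rfl | rfl | rfl) <;> simp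

lemma hcos0 : ∀ x : ℝ, (x = π/2 ∨ x = -(π/2)) → Real.cos x = 0 := by
  rintro x (rfl | rfl) <;> simp

lemma hv1 : ∀ m : Fin 4, (![0, π/2, π/2, π/2] : Fin 4 → ℝ) m = 0
    ∨ (![0, π/2, π/2, π/2] : Fin 4 → ℝ) m = π/2 := by
  intro m; fin_cases m <;> simp

lemma hv2 : ∀ m : Fin 4, (![0, π/2, 0, 0] : Fin 4 → ℝ) m = 0
    ∨ (![0, π/2, 0, 0] : Fin 4 → ℝ) m = π/2 := by
  intro m; fin_cases m <;> simp

lemma sin1 (μ ν : Fin 4) :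
    Real.sin (2 * (![0, π/2, π/2, π/2] μ - ![0, π/2, π/2, π/2] ν)) = 0 := by
  rcases hv1 μ with h1 | h1 <;> rcases hv1 ν with h2 | h2 <;> rw [h1, h2] <;> apply hsin0 <;>
    first
      | (left; ring1)
      | (right; left; ring1)
      | (right; right; ring1)

lemma sin2 (μ ν : Fin 4) :
    Real.sin (2 * (![0, π/2, 0, 0] μ - ![0, π/2, 0, 0] ν)) = 0 := by
  rcases hv2 μ with h1 | h1 <;> rcases hv2 ν with h2 | h2 <;> rw [h1, h2] <;> apply hsin0 <;>
    first
      | (left; ring1)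
      | (right; left; ring1)
      | (right; right; ring1)

lemma cos1 : ∀ a : Fin 4 → Fin 4, Function.Bijective a →
    Real.cos (![0, π/2, π/2, π/2] (a 0) - ![0, π/2, π/2, π/2] (a 1)
      + ![0, π/2, π/2, π/2] (a 2) - ![0, π/2, π/2, π/2] (a 3)) = 0 := by
  intro a ha
  obtain ⟨i, hi⟩ := ha.surjective 0
  have hne : ∀ j, j ≠ i → (![0, π/2, π/2, π/2] : Fin 4 → ℝ) (a j) = π/2 := by
    intro j hj
    have h0 : a j ≠ 0 := fun e => hj (ha.injective (e.trans hi.symm))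
    generalize a j = m at h0 ⊢
    fin_cases m <;> simp_all
  apply hcos0
  fin_cases i
  · rw [show a 0 = 0 from hi, hne 1 (by decide), hne 2 (by decide), hne 3 (by decide)]
    rw [show (![0, π/2, π/2, π/2] : Fin 4 → ℝ) 0 = 0 from rfl]
    right; ring1
  · rw [show a 1 = 0 from hi, hne 0 (by decide), hne 2 (by decide), hne 3 (by decide)]
    rw [show (![0, π/2, π/2, π/2] : Fin 4 → ℝ) 0 = 0 from rfl]
    left; ring1
  · rw [show a 2 = 0 from hi, hne 0 (by decide), hne 1 (by decide), hne 3 (by decide)]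
    rw [show (![0, π/2, π/2, π/2] : Fin 4 → ℝ) 0 = 0 from rfl]
    right; ring1
  · rw [show a 3 = 0 from hi, hne 0 (by decide), hne 1 (by decide), hne 2 (by decide)]
    rw [show (![0, π/2, π/2, π/2] : Fin 4 → ℝ) 0 = 0 from rfl]
    left; ring1

lemma cos2 : ∀ a : Fin 4 → Fin 4, Function.Bijective a →
    Real.cos (![0, π/2, 0, 0] (a 0) - ![0, π/2, 0, 0] (a 1)
      + ![0, π/2, 0, 0] (a 2) - ![0, π/2, 0, 0] (a 3)) = 0 := by
  intro a ha
  obtain ⟨i, hi⟩ := ha.surjective 1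
  have hne : ∀ j, j ≠ i → (![0, π/2, 0, 0] : Fin 4 → ℝ) (a j) = 0 := by
    intro j hj
    have h0 : a j ≠ 1 := fun e => hj (ha.injective (e.trans hi.symm))
    generalize a j = m at h0 ⊢
    fin_cases m <;> simp_all
  apply hcos0
  fin_cases i
  · rw [show a 0 = 1 from hi, hne 1 (by decide), hne 2 (by decide), hne 3 (by decide)]
    rw [show (![0, π/2, 0, 0] : Fin 4 → ℝ) 1 = π/2 from rfl]
    left; ring1
  · rw [show a 1 = 1 from hi, hne 0 (by decide), hne 2 (by decide), hne 3 (by decide)]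
    rw [show (![0, π/2, 0, 0] : Fin 4 → ℝ) 1 = π/2 from rfl]
    right; ring1
  · rw [show a 2 = 1 from hi, hne 0 (by decide), hne 1 (by decide), hne 3 (by decide)]
    rw [show (![0, π/2, 0, 0] : Fin 4 → ℝ) 1 = π/2 from rfl]
    left; ring1
  · rw [show a 3 = 1 from hi, hne 0 (by decide), hne 1 (by decide), hne 2 (by decide)]
    rw [show (![0, π/2, 0, 0] : Fin 4 → ℝ) 1 = π/2 from rfl]
    right; ring1

/-- chT vanishes iff all its coefficients vanish; in particular it
vanishes for φ = (π/2, π/2, π/2) and φ = (π/2, 0, 0), but not for φ = (0,0,0). -/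
theorem stmt_19 (φ₁ φ₂ φ₃ : ℝ) :
    (chT φ₁ φ₂ φ₃ = 0 ↔
      ((∀ a : Fin 4 → Fin 4, Function.Bijective a →
          Real.cos (![0, φ₁, φ₂, φ₃] (a 0) - ![0, φ₁, φ₂, φ₃] (a 1)
            + ![0, φ₁, φ₂, φ₃] (a 2) - ![0, φ₁, φ₂, φ₃] (a 3)) = 0) ∧
       (∀ μ ν : Fin 4,
          Real.sin (2 * (![0, φ₁, φ₂, φ₃] μ - ![0, φ₁, φ₂, φ₃] ν)) = 0))) ∧
    chT (π/2) (π/2) (π/2) = 0 ∧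
    chT (π/2) 0 0 = 0 ∧
    chT 0 0 0 ≠ 0 := by
  refine ⟨chT_zero_iff φ₁ φ₂ φ₃, ?_, ?_, ?_⟩
  · exact (chT_zero_iff _ _ _).mpr ⟨cos1, sin1⟩
  · exact (chT_zero_iff _ _ _).mpr ⟨cos2, sin2⟩
  · intro h
    obtain ⟨h1, -⟩ := (chT_zero_iff 0 0 0).mp h
    have := h1 id Function.bijective_id
    simp at this
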